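/- The spectrum of the discrete Laplacian −Δ_h, viewed as a bounded linear operator on the complex Hilbert space ℓ²(ℤ, ℂ), is exactly the interval [0, 4/h²]: the spectrum (over ℂ) of −Δ_h equals the image of the real interval [0, 4/h²] under the canonical embedding ℝ → ℂ. -/

import Mathlib

noncomputable section

abbrev E2 : Type := lp (fun _ : ℤ => ℂ) 2

lemma two_toReal : ENNReal.toReal 2 = 2 := by norm_num

lemma memℓp_shift (f : E2) (k : ℤ) : Memℓp (fun n : ℤ => f (n + k)) 2 := by
  apply memℓp_gen
  have hs := (lp.memℓp f).summable (p := 2) (by norm_num)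
  have := ((Equiv.addRight k).summable_iff
      (f := fun n : ℤ => ‖f n‖ ^ ENNReal.toReal 2)).mpr hs
  simpa [Function.comp_def] using this

def shiftFun (k : ℤ) (f : E2) : E2 := ⟨fun n => f (n + k), memℓp_shift f k⟩

@[simp] lemma shiftFun_apply (k : ℤ) (f : E2) (n : ℤ) : shiftFun k f n = f (n + k) := rfl

lemma norm_shiftFun (k : ℤ) (f : E2) : ‖shiftFun k f‖ = ‖f‖ := by
  have h1 := lp.norm_rpow_eq_tsum (p := 2) (by norm_num) (shiftFun k f)
  have h2 := lp.norm_rpow_eq_tsum (p := 2) (by norm_num) f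
  have h3 : ∑' n : ℤ, ‖shiftFun k f n‖ ^ ENNReal.toReal 2
      = ∑' n : ℤ, ‖f n‖ ^ ENNReal.toReal 2 := by
    have := (Equiv.addRight k).tsum_eq (f := fun n : ℤ => ‖f n‖ ^ ENNReal.toReal 2)
    simpa [Function.comp] using this
  rw [h3, ← h2, two_toReal] at h1
  have h1' : ‖shiftFun k f‖ ^ (2:ℕ) = ‖f‖ ^ (2:ℕ) := by
    rw [← Real.rpow_natCast, ← Real.rpow_natCast]; exact_mod_cast h1
  exact (sq_eq_sq₀ (norm_nonneg _) (norm_nonneg _)).mp h1'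

def shiftLI : E2 ≃ₗᵢ[ℂ] E2 where
  toFun := shiftFun 1
  invFun := shiftFun (-1)
  map_add' f g := by ext n; simp
  map_smul' c f := by ext n; simp
  left_inv f := by ext n; simp
  right_inv f := by ext n; simp
  norm_map' := norm_shiftFun 1

end

noncomputable section
open ContinuousLinearMap

def Sop : E2 →L[ℂ] E2 := (shiftLI : E2 →L[ℂ] E2)

@[simp] lemma Sop_apply (f : E2) (n : ℤ) : Sop f n = f (n + 1) := rfl

lemma star_Sop : star Sop = ((shiftLI.symm : E2 →L[ℂ] E2)) := by
  rw [star_eq_adjoint]; exact shiftLI.adjoint_eq_symm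

@[simp] lemma star_Sop_apply (f : E2) (n : ℤ) : (star Sop) f n = f (n - 1) := by
  rw [star_Sop]
  show (shiftFun (-1) f) n = f (n - 1)
  simp [sub_eq_add_neg]

lemma star_Sop_mul_Sop : star Sop * Sop = 1 := by
  ext f n
  simp

lemma Sop_mul_star_Sop : Sop * star Sop = 1 := by
  ext f n
  simp
end

noncomputable section
open ContinuousLinearMap

variable {h : ℝ} (hh : 0 < h) (H : E2 →L[ℂ] E2)
  (hH : ∀ (φ : E2) (n : ℤ),
      H φ n = ((h : ℂ) ^ 2)⁻¹ * (2 * φ n - φ (n + 1) - φ (n - 1)))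

def B1 (h : ℝ) : E2 →L[ℂ] E2 := ((h⁻¹ : ℝ) : ℂ) • (1 - Sop)

def B2 (h : ℝ) : E2 →L[ℂ] E2 := ((h⁻¹ : ℝ) : ℂ) • (1 + Sop)

include hH in
lemma key1 : H = star (B1 h) * B1 h := by
  ext f n
  rw [hH]
  simp only [B1, star_smul, star_sub, star_one, mul_apply_eq_comp, smul_apply, sub_apply, add_apply,
    one_apply_eq_self, lp.coeFn_smul, Pi.smul_apply, lp.coeFn_sub, Pi.sub_apply, Sop_apply,
    star_Sop_apply, Complex.star_def, Complex.conj_ofReal, smul_eq_mul]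
  push_cast
  ring_nf

include hh hH in
lemma key2 : algebraMap ℝ (E2 →L[ℂ] E2) (4 / h ^ 2) - H = star (B2 h) * B2 h := by
  ext f n
  simp only [Algebra.algebraMap_eq_smul_one, B2, star_smul, star_add, star_one, mul_apply_eq_comp,
    smul_apply, sub_apply, add_apply, one_apply_eq_self, lp.coeFn_smul, Pi.smul_apply, lp.coeFn_sub,
    Pi.sub_apply, lp.coeFn_add, Pi.add_apply, Sop_apply, star_Sop_apply, Complex.star_def,
    Complex.conj_ofReal, smul_eq_mul, Complex.real_smul, hH]
  push_cast
  have hz : (h : ℂ) ≠ 0 := by exact_mod_cast hh.ne'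
  field_simp
  ring

include hh hH in
lemma spec_subset : spectrum ℂ H ⊆ (fun x : ℝ => (x : ℂ)) '' Set.Icc 0 (4 / h ^ 2) := by
  have hsa : IsSelfAdjoint H := key1 H hH ▸ IsSelfAdjoint.star_mul_self (B1 h)
  have himg : (algebraMap ℝ ℂ) '' spectrum ℝ H = spectrum ℂ H :=
    hsa.spectrumRestricts.algebraMap_image
  intro z hz
  rw [← himg] at hz
  obtain ⟨x, hx, rfl⟩ := hz
  refine ⟨x, ⟨?_, ?_⟩, rfl⟩
  · exact spectrum_nonneg_of_nonneg (key1 H hH ▸ star_mul_self_nonneg (B1 h)) hx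
  · have hmem : (4 / h ^ 2 - x) ∈ spectrum ℝ (algebraMap ℝ (E2 →L[ℂ] E2) (4 / h ^ 2) - H) := by
      rw [← spectrum.singleton_sub_eq]
      exact Set.sub_mem_sub rfl hx
    have h0 : 0 ≤ 4 / h ^ 2 - x :=
      spectrum_nonneg_of_nonneg (key2 hh H hH ▸ star_mul_self_nonneg (B2 h)) hmem
    linarith

end

noncomputable section
open ContinuousLinearMap Complex

lemma norm_sq_eq_tsum (f : E2) : ‖f‖ ^ 2 = ∑' n : ℤ, ‖f n‖ ^ 2 := by
  have h0 := lp.norm_rpow_eq_tsum (p := 2) (by norm_num) f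
  rw [two_toReal] at h0
  have h2 : ∀ r : ℝ, r ^ (2 : ℝ) = r ^ (2 : ℕ) := fun r => by
    rw [← Real.rpow_natCast r 2]; norm_num
  simp only [h2] at h0
  exact h0

lemma norm_sq_sum_single (s : Finset ℤ) (f : ℤ → ℂ) :
    ‖∑ i ∈ s, lp.single 2 i (f i)‖ ^ 2 = ∑ i ∈ s, ‖f i‖ ^ 2 := by
  have h0 := lp.norm_sum_single (p := 2) (by norm_num) (fun i : ℤ => (f i : ℂ)) s
  rw [two_toReal] at h0
  have h2 : ∀ r : ℝ, r ^ (2 : ℝ) = r ^ (2 : ℕ) := fun r => by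
    rw [← Real.rpow_natCast r 2]; norm_num
  simp only [h2] at h0
  exact h0

variable {h : ℝ} (hh : 0 < h) (H : E2 →L[ℂ] E2)
  (hH : ∀ (φ : E2) (n : ℤ),
      H φ n = ((h : ℂ) ^ 2)⁻¹ * (2 * φ n - φ (n + 1) - φ (n - 1)))

set_option maxHeartbeats 2000000 in
include hh hH in
lemma spec_supset : (fun x : ℝ => (x : ℂ)) '' Set.Icc 0 (4 / h ^ 2) ⊆ spectrum ℂ H := by
  rintro - ⟨x, ⟨hx0, hx1⟩, rfl⟩
  have hhc : (h : ℂ) ≠ 0 := by exact_mod_cast hh.ne'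
  have hxh : x * h ^ 2 ≤ 4 := (le_div_iff₀ (by positivity)).mp hx1
  have hxh0 : 0 ≤ x * h ^ 2 := by positivity
  set θ := Real.arccos (1 - x * h ^ 2 / 2) with hθdef
  have hcos : Real.cos θ = 1 - x * h ^ 2 / 2 :=
    Real.cos_arccos (by nlinarith) (by nlinarith)
  set z : ℂ := Complex.exp ((θ : ℂ) * Complex.I) with hzdef
  have hz0 : z ≠ 0 := Complex.exp_ne_zero _
  have habs : ∀ m : ℤ, ‖z ^ m‖ = 1 := fun m => by
    rw [norm_zpow, hzdef, Complex.norm_exp_ofReal_mul_I, one_zpow]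
  have hzsum : z + z⁻¹ = 2 - (x : ℂ) * (h : ℂ) ^ 2 := by
    rw [hzdef, ← Complex.exp_neg,
      show -((θ:ℂ) * Complex.I) = ((-θ : ℝ) : ℂ) * Complex.I by push_cast; ring,
      Complex.exp_mul_I, Complex.exp_mul_I, Complex.ofReal_neg, Complex.cos_neg,
      Complex.sin_neg, ← Complex.ofReal_cos, ← Complex.ofReal_sin, hcos]
    push_cast
    ring
  have hkey : ∀ m : ℤ, z ^ (m + 1) + z ^ (m - 1) = (2 - (x:ℂ) * (h:ℂ) ^ 2) * z ^ m := fun m => by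
    rw [zpow_add_one₀ hz0, zpow_sub_one₀ hz0, ← hzsum]; ring
  set s : ℕ → Finset ℤ := fun N => Finset.Icc (-(N:ℤ)) (N:ℤ) with hs
  set φ : ℕ → E2 := fun N => ∑ n ∈ s N, lp.single 2 n ((z ^ n : ℂ)) with hφ
  have hφ_apply : ∀ (N : ℕ) (m : ℤ), (φ N) m = if m ∈ s N then z ^ m else 0 := by
    intro N m
    have hcoe : (φ N) m = ∑ i ∈ s N, (lp.single 2 i ((z ^ i : ℂ)) : E2) m := by
      rw [hφ, lp.coeFn_sum, Finset.sum_apply]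
    rw [hcoe]
    by_cases hm : m ∈ s N
    · rw [if_pos hm, Finset.sum_eq_single_of_mem m hm]
      · exact lp.single_apply_self 2 m _
      · intro i hi hne
        exact lp.single_apply_ne 2 i _ (Ne.symm hne)
    · rw [if_neg hm, Finset.sum_eq_zero]
      intro i hi
      exact lp.single_apply_ne 2 i _ (fun hmi => hm (hmi ▸ hi))
  have hφ_le_one : ∀ (N : ℕ) (m : ℤ), ‖(φ N) m‖ ≤ 1 := by
    intro N m
    rw [hφ_apply]
    split
    · rw [habs]
    · simp
  have hφ_norm : ∀ N : ℕ, ‖φ N‖ ^ 2 = ((s N).card : ℝ) := by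
    intro N
    rw [hφ, norm_sq_sum_single]
    rw [Finset.sum_congr rfl (fun i _ => by rw [habs, one_pow])]
    rw [Finset.sum_const, nsmul_eq_mul, mul_one]
  have hcard : ∀ N : ℕ, (N : ℝ) ≤ ((s N).card : ℝ) := by
    intro N
    have : (s N).card = 2 * N + 1 := by
      rw [hs]
      rw [Int.card_Icc]
      omega
    rw [this]
    push_cast
    linarith
  set g : ℕ → E2 := fun N => H (φ N) - (x:ℂ) • (φ N) with hg
  have hg_apply : ∀ (N : ℕ) (m : ℤ), (g N) m
      = ((h:ℂ) ^ 2)⁻¹ * ((2 - (x:ℂ) * (h:ℂ) ^ 2) * (φ N) m - (φ N) (m + 1) - (φ N) (m - 1)) := by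
    intro N m
    rw [hg]
    simp only [lp.coeFn_sub, Pi.sub_apply, lp.coeFn_smul, Pi.smul_apply, hH, smul_eq_mul]
    field_simp
    ring
  have hg_zero : ∀ (N : ℕ) (m : ℤ),
      m ∉ ({(N:ℤ), (N:ℤ) + 1, -(N:ℤ), -(N:ℤ) - 1} : Finset ℤ) → (g N) m = 0 := by
    intro N m hm
    simp only [Finset.mem_insert, Finset.mem_singleton, not_or] at hm
    obtain ⟨h1, h2, h3, h4⟩ := hm
    rw [hg_apply]
    by_cases hmem : m ∈ s N
    · have hmem' : -(N:ℤ) ≤ m ∧ m ≤ N := by rwa [hs, Finset.mem_Icc] at hmem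
      have hm1 : (m + 1) ∈ s N := by rw [hs, Finset.mem_Icc]; omega
      have hm2 : (m - 1) ∈ s N := by rw [hs, Finset.mem_Icc]; omega
      rw [hφ_apply, hφ_apply, hφ_apply, if_pos hmem, if_pos hm1, if_pos hm2, ← hkey m]
      ring
    · have hmem' : ¬(-(N:ℤ) ≤ m ∧ m ≤ N) := by rwa [hs, Finset.mem_Icc] at hmem
      have hm1 : (m + 1) ∉ s N := by rw [hs, Finset.mem_Icc]; omega
      have hm2 : (m - 1) ∉ s N := by rw [hs, Finset.mem_Icc]; omega
      rw [hφ_apply, hφ_apply, hφ_apply, if_neg hmem, if_neg hm1, if_neg hm2]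
      ring
  have hg_coord : ∀ (N : ℕ) (m : ℤ), ‖(g N) m‖ ≤ 4 / h ^ 2 := by
    intro N m
    rw [hg_apply]
    have e1 : ‖((h:ℂ) ^ 2)⁻¹‖ = (h ^ 2)⁻¹ := by
      rw [norm_inv, norm_pow, Complex.norm_real, Real.norm_eq_abs, abs_of_pos hh]
    have e2 : ‖(2 - (x:ℂ) * (h:ℂ) ^ 2)‖ ≤ 2 := by
      rw [show (2 - (x:ℂ) * (h:ℂ) ^ 2) = ((2 - x * h ^ 2 : ℝ) : ℂ) by push_cast; ring,
        Complex.norm_real, Real.norm_eq_abs, abs_le]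
      constructor <;> nlinarith
    calc ‖((h:ℂ) ^ 2)⁻¹ * ((2 - (x:ℂ) * (h:ℂ) ^ 2) * (φ N) m - (φ N) (m + 1) - (φ N) (m - 1))‖
        = (h ^ 2)⁻¹ * ‖(2 - (x:ℂ) * (h:ℂ) ^ 2) * (φ N) m - (φ N) (m + 1) - (φ N) (m - 1)‖ := by
          rw [norm_mul, e1]
      _ ≤ (h ^ 2)⁻¹ * (2 * 1 + 1 + 1) := by
          apply mul_le_mul_of_nonneg_left _ (by positivity)
          calc ‖(2 - (x:ℂ) * (h:ℂ) ^ 2) * (φ N) m - (φ N) (m + 1) - (φ N) (m - 1)‖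
              ≤ ‖(2 - (x:ℂ) * (h:ℂ) ^ 2) * (φ N) m - (φ N) (m + 1)‖ + ‖(φ N) (m - 1)‖ :=
                norm_sub_le _ _
            _ ≤ ‖(2 - (x:ℂ) * (h:ℂ) ^ 2) * (φ N) m‖ + ‖(φ N) (m + 1)‖ + ‖(φ N) (m - 1)‖ := by
                have := norm_sub_le ((2 - (x:ℂ) * (h:ℂ) ^ 2) * (φ N) m) ((φ N) (m + 1))
                linarith
            _ ≤ 2 * 1 + 1 + 1 := by
                have e3 : ‖(2 - (x:ℂ) * (h:ℂ) ^ 2) * (φ N) m‖ ≤ 2 * 1 := by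
                  rw [norm_mul]
                  exact mul_le_mul e2 (hφ_le_one N m) (norm_nonneg _) (by norm_num)
                have := hφ_le_one N (m + 1)
                have := hφ_le_one N (m - 1)
                linarith
      _ = 4 / h ^ 2 := by field_simp; ring
  have hg_norm : ∀ N : ℕ, ‖g N‖ ^ 2 ≤ 4 * (4 / h ^ 2) ^ 2 := by
    intro N
    rw [norm_sq_eq_tsum]
    rw [tsum_eq_sum (s := ({(N:ℤ), (N:ℤ) + 1, -(N:ℤ), -(N:ℤ) - 1} : Finset ℤ))
      (fun m hm => by rw [hg_zero N m hm]; simp)]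
    have hc4 : (({(N:ℤ), (N:ℤ) + 1, -(N:ℤ), -(N:ℤ) - 1} : Finset ℤ)).card ≤ 4 := by
      apply le_trans (Finset.card_insert_le _ _)
      have := Finset.card_insert_le ((N:ℤ) + 1) ({-(N:ℤ), -(N:ℤ) - 1} : Finset ℤ)
      have := Finset.card_insert_le (-(N:ℤ)) ({-(N:ℤ) - 1} : Finset ℤ)
      simp only [Finset.card_singleton] at *
      omega
    calc ∑ m ∈ ({(N:ℤ), (N:ℤ) + 1, -(N:ℤ), -(N:ℤ) - 1} : Finset ℤ), ‖(g N) m‖ ^ 2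
        ≤ ∑ _m ∈ ({(N:ℤ), (N:ℤ) + 1, -(N:ℤ), -(N:ℤ) - 1} : Finset ℤ), (4 / h ^ 2) ^ 2 :=
          Finset.sum_le_sum (fun m _ => by
            have := hg_coord N m
            have := norm_nonneg ((g N) m)
            nlinarith)
      _ = (({(N:ℤ), (N:ℤ) + 1, -(N:ℤ), -(N:ℤ) - 1} : Finset ℤ)).card * (4 / h ^ 2) ^ 2 := by
          rw [Finset.sum_const, nsmul_eq_mul]
      _ ≤ 4 * (4 / h ^ 2) ^ 2 := by
          have : (0:ℝ) ≤ (4 / h ^ 2) ^ 2 := by positivity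
          have hc4' : ((({(N:ℤ), (N:ℤ) + 1, -(N:ℤ), -(N:ℤ) - 1} : Finset ℤ)).card : ℝ) ≤ 4 := by
            exact_mod_cast hc4
          nlinarith
  by_contra hspec
  rw [spectrum.notMem_iff] at hspec
  obtain ⟨u, hu⟩ := hspec
  set T := (↑u⁻¹ : E2 →L[ℂ] E2) with hT
  have hTc : ∀ f : E2, T ((algebraMap ℂ (E2 →L[ℂ] E2) (x:ℂ) - H) f) = f := by
    intro f
    have h1 : T * (algebraMap ℂ (E2 →L[ℂ] E2) (x:ℂ) - H) = 1 := by
      rw [hT, ← hu]; exact u.inv_mul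
    calc T ((algebraMap ℂ (E2 →L[ℂ] E2) (x:ℂ) - H) f)
        = (T * (algebraMap ℂ (E2 →L[ℂ] E2) (x:ℂ) - H)) f := rfl
      _ = f := by rw [h1]; rfl
  have hkey2 : ∀ N : ℕ, ‖φ N‖ ≤ ‖T‖ * ‖g N‖ := by
    intro N
    have h1 : (algebraMap ℂ (E2 →L[ℂ] E2) (x:ℂ) - H) (φ N) = -(g N) := by
      rw [hg]
      simp only [Algebra.algebraMap_eq_smul_one, sub_apply, smul_apply, one_apply_eq_self]
      abel
    calc ‖φ N‖ = ‖T ((algebraMap ℂ (E2 →L[ℂ] E2) (x:ℂ) - H) (φ N))‖ := by rw [hTc]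
      _ ≤ ‖T‖ * ‖(algebraMap ℂ (E2 →L[ℂ] E2) (x:ℂ) - H) (φ N)‖ := T.le_opNorm _
      _ = ‖T‖ * ‖g N‖ := by rw [h1, norm_neg]
  obtain ⟨N, hN⟩ := exists_nat_gt (‖T‖ ^ 2 * (4 * (4 / h ^ 2) ^ 2))
  have h1 : ‖φ N‖ ^ 2 ≤ ‖T‖ ^ 2 * ‖g N‖ ^ 2 := by
    have := hkey2 N
    nlinarith [norm_nonneg (φ N), norm_nonneg (g N), norm_nonneg T]
  have h2 := hg_norm N
  have h3 := hφ_norm N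
  have h4 := hcard N
  nlinarith [norm_nonneg T, sq_nonneg ‖T‖, sq_nonneg ‖g N‖]

end

/-- The spectrum of the discrete Laplacian `−Δ_h` on `ℓ²(ℤ, ℂ)`
is exactly the interval `[0, 4/h²]` (embedded in `ℂ`). -/
theorem stmt_0 (h : ℝ) (hh : 0 < h)
    (H : lp (fun _ : ℤ => ℂ) 2 →L[ℂ] lp (fun _ : ℤ => ℂ) 2)
    (hH : ∀ (φ : lp (fun _ : ℤ => ℂ) 2) (n : ℤ),
      H φ n = ((h : ℂ) ^ 2)⁻¹ * (2 * φ n - φ (n + 1) - φ (n - 1))) :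
    spectrum ℂ H = (fun x : ℝ => (x : ℂ)) '' Set.Icc 0 (4 / h ^ 2) :=
  Set.Subset.antisymm (spec_subset hh H hH) (spec_supset hh H hH)
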